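/- Suppose X_1, X_2, ... are iid random vectors in ℝ^d with mean μ and E‖X − μ‖² = σ² < ∞, and let X̄_{i−1} = (1/(i−1))Σ_{j<i} X_j denote the running sample mean (X̄_0 := 0). Then σ̂_n² := (1/n)Σ_{i=1}^n ‖X_i − X̄_{i−1}‖² converges to σ² almost surely as n → ∞. -/

import Mathlib

open MeasureTheory ProbabilityTheory Filter

private lemma norm_sq_diff_bound {E : Type*} [NormedAddCommGroup E] (u v : E) :
    |‖u‖ ^ 2 - ‖v‖ ^ 2| ≤ ‖u - v‖ * (2 * ‖v‖ + ‖u - v‖) := by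
  have h1 : |‖u‖ - ‖v‖| ≤ ‖u - v‖ := abs_norm_sub_norm_le u v
  have h1' := abs_le.mp h1
  have h2 : (0:ℝ) ≤ ‖u‖ := norm_nonneg u
  have h3 : (0:ℝ) ≤ ‖v‖ := norm_nonneg v
  have h4 : (0:ℝ) ≤ ‖u - v‖ := norm_nonneg _
  rw [abs_le]
  constructor <;> nlinarith [h1'.1, h1'.2]

private lemma cesaro_cross_to_zero (a c : ℕ → ℝ) (ha : ∀ n, 0 ≤ a n) (hc : ∀ n, 0 ≤ c n)
    (L : ℝ)
    (hL : Tendsto (fun n : ℕ => (n : ℝ)⁻¹ * ∑ i ∈ Finset.range n, a i ^ 2) atTop (nhds L))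
    (hc0 : Tendsto (fun n => c n ^ 2) atTop (nhds 0)) :
    Tendsto (fun n : ℕ => (n : ℝ)⁻¹ * ∑ i ∈ Finset.range n, c i * (2 * a i + c i))
      atTop (nhds 0) := by
  set S : ℕ → ℝ := fun n => (n : ℝ)⁻¹ * ∑ i ∈ Finset.range n, a i ^ 2 with hS
  set T : ℕ → ℝ := fun n => (n : ℝ)⁻¹ * ∑ i ∈ Finset.range n, c i ^ 2 with hT
  have hTlim : Tendsto T atTop (nhds 0) := by
    have := hc0.cesaro
    simpa [smul_eq_mul] using this
  have hSnn : ∀ n, 0 ≤ S n := fun n =>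
    mul_nonneg (by positivity) (Finset.sum_nonneg fun i _ => sq_nonneg _)
  have hTnn : ∀ n, 0 ≤ T n := fun n =>
    mul_nonneg (by positivity) (Finset.sum_nonneg fun i _ => sq_nonneg _)
  -- upper bound each term
  have key : ∀ n : ℕ, (n : ℝ)⁻¹ * ∑ i ∈ Finset.range n, c i * (2 * a i + c i)
      ≤ 2 * Real.sqrt (T n) * Real.sqrt (S n) + T n := by
    intro n
    have hexp : (n : ℝ)⁻¹ * ∑ i ∈ Finset.range n, c i * (2 * a i + c i)
        = 2 * ((n : ℝ)⁻¹ * ∑ i ∈ Finset.range n, c i * a i) + T n := by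
      rw [hT]
      rw [show (∑ i ∈ Finset.range n, c i * (2 * a i + c i))
        = 2 * (∑ i ∈ Finset.range n, c i * a i) + ∑ i ∈ Finset.range n, c i ^ 2 by
          rw [Finset.mul_sum, ← Finset.sum_add_distrib]; congr 1; ext i; ring]
      ring
    rw [hexp]
    have hca : (n : ℝ)⁻¹ * ∑ i ∈ Finset.range n, c i * a i
        ≤ Real.sqrt (T n) * Real.sqrt (S n) := by
      have hcs := Finset.sum_mul_sq_le_sq_mul_sq (Finset.range n) c a
      have hnn : 0 ≤ (n : ℝ)⁻¹ * ∑ i ∈ Finset.range n, c i * a i :=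
        mul_nonneg (by positivity)
          (Finset.sum_nonneg fun i _ => mul_nonneg (hc i) (ha i))
      have hsq : ((n : ℝ)⁻¹ * ∑ i ∈ Finset.range n, c i * a i) ^ 2 ≤ T n * S n := by
        have : ((n : ℝ)⁻¹ * ∑ i ∈ Finset.range n, c i * a i) ^ 2
            = (n : ℝ)⁻¹ ^ 2 * (∑ i ∈ Finset.range n, c i * a i) ^ 2 := by ring
        rw [this, hT, hS]
        calc (n : ℝ)⁻¹ ^ 2 * (∑ i ∈ Finset.range n, c i * a i) ^ 2
            ≤ (n : ℝ)⁻¹ ^ 2 * ((∑ i ∈ Finset.range n, c i ^ 2) *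
              ∑ i ∈ Finset.range n, a i ^ 2) := by
              apply mul_le_mul_of_nonneg_left hcs (by positivity)
          _ = ((n : ℝ)⁻¹ * ∑ i ∈ Finset.range n, c i ^ 2) *
              ((n : ℝ)⁻¹ * ∑ i ∈ Finset.range n, a i ^ 2) := by ring
      calc (n : ℝ)⁻¹ * ∑ i ∈ Finset.range n, c i * a i
          = Real.sqrt (((n : ℝ)⁻¹ * ∑ i ∈ Finset.range n, c i * a i) ^ 2) := by
            rw [Real.sqrt_sq hnn]
        _ ≤ Real.sqrt (T n * S n) := Real.sqrt_le_sqrt hsq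
        _ = Real.sqrt (T n) * Real.sqrt (S n) := Real.sqrt_mul (hTnn n) _
    nlinarith
  have hlow : ∀ n : ℕ, 0 ≤ (n : ℝ)⁻¹ * ∑ i ∈ Finset.range n, c i * (2 * a i + c i) := by
    intro n
    exact mul_nonneg (by positivity) (Finset.sum_nonneg fun i _ =>
      mul_nonneg (hc i) (by nlinarith [ha i, hc i]))
  have hub : Tendsto (fun n => 2 * Real.sqrt (T n) * Real.sqrt (S n) + T n) atTop (nhds 0) := by
    have hsT : Tendsto (fun n => Real.sqrt (T n)) atTop (nhds 0) := by
      have := (Real.continuous_sqrt.tendsto 0).comp hTlim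
      simpa [Function.comp_def] using this
    have hsS : Tendsto (fun n => Real.sqrt (S n)) atTop (nhds (Real.sqrt L)) :=
      (Real.continuous_sqrt.tendsto L).comp hL
    have := ((tendsto_const_nhds (x := (2:ℝ))).mul hsT).mul hsS |>.add hTlim
    simpa using this
  exact tendsto_of_tendsto_of_tendsto_of_le_of_le tendsto_const_nhds hub hlow key

theorem empirical_variance_proxy_tendsto {d : ℕ} {Ω : Type*} [MeasurableSpace Ω]
    (P : Measure Ω) [IsProbabilityMeasure P]
    (X : ℕ → Ω → EuclideanSpace ℝ (Fin d))
    (hmeas : ∀ i, Measurable (X i))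
    (hindep : iIndepFun X P)
    (hident : ∀ i, IdentDistrib (X i) (X 0) P P)
    (hint : Integrable (X 0) P)
    (μ : EuclideanSpace ℝ (Fin d)) (hμ : μ = ∫ ω, X 0 ω ∂P)
    (σ2 : ℝ) (hσ2 : σ2 = ∫ ω, ‖X 0 ω - μ‖ ^ 2 ∂P)
    (hsq : Integrable (fun ω => ‖X 0 ω - μ‖ ^ 2) P)
    -- running sample means: `Xbar i ω` is the mean of `X 0 ω, ..., X (i-1) ω` (zero for `i = 0`)
    (Xbar : ℕ → Ω → EuclideanSpace ℝ (Fin d))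
    (hXbar : ∀ i ω, Xbar i ω = (i : ℝ)⁻¹ • ∑ j ∈ Finset.range i, X j ω) :
    ∀ᵐ ω ∂P, Tendsto
      (fun n : ℕ => (n : ℝ)⁻¹ * ∑ i ∈ Finset.range n, ‖X i ω - Xbar i ω‖ ^ 2)
      atTop (nhds σ2) := by
  have hφmeas : Measurable (fun x : EuclideanSpace ℝ (Fin d) => ‖x - μ‖ ^ 2) :=
    ((measurable_id.sub_const μ).norm).pow_const 2
  set Y : ℕ → Ω → ℝ := fun i ω => ‖X i ω - μ‖ ^ 2 with hY
  have hYindep : Pairwise (Function.onFun (IndepFun · · P) Y) := fun i j hij =>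
    (hindep.indepFun hij).comp hφmeas hφmeas
  have hYident : ∀ i, IdentDistrib (Y i) (Y 0) P P := fun i =>
    (hident i).comp hφmeas
  have hA := strong_law_ae Y hsq hYindep hYident
  have hB := strong_law_ae X hint
    (fun i j hij => hindep.indepFun hij) hident
  filter_upwards [hA, hB] with ω hAω hBω
  -- SLLN facts at ω
  have hAω' : Tendsto (fun n : ℕ => (n : ℝ)⁻¹ * ∑ i ∈ Finset.range n, ‖X i ω - μ‖ ^ 2)
      atTop (nhds σ2) := by
    have hE : (∫ ω, Y 0 ω ∂P) = σ2 := by rw [hσ2]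
    rw [← hE]
    simpa [smul_eq_mul, Finset.mul_sum] using hAω
  have hXbarω : Tendsto (fun n => Xbar n ω) atTop (nhds μ) := by
    have hE : (∫ ω, X 0 ω ∂P) = μ := hμ.symm
    rw [← hE]
    have : (fun n : ℕ => Xbar n ω)
        = fun n : ℕ => (n : ℝ)⁻¹ • ∑ i ∈ Finset.range n, X i ω := by
      exact funext fun n => hXbar n ω
    rw [this]
    exact hBω
  -- numbers
  set a : ℕ → ℝ := fun i => ‖X i ω - μ‖ with ha'
  set c : ℕ → ℝ := fun i => ‖μ - Xbar i ω‖ with hc'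
  have hc0 : Tendsto (fun n => c n ^ 2) atTop (nhds 0) := by
    have h1 : Tendsto (fun n => μ - Xbar n ω) atTop (nhds (μ - μ)) :=
      tendsto_const_nhds.sub hXbarω
    have h2 : Tendsto c atTop (nhds 0) := by
      have := h1.norm
      simpa [hc'] using this
    have := (continuous_pow 2).continuousAt.tendsto.comp h2
    simpa [Function.comp_def] using this
  have hcross := cesaro_cross_to_zero a c (fun n => norm_nonneg _) (fun n => norm_nonneg _)
    σ2 (by simpa [ha'] using hAω') hc0
  -- remainder tends to 0
  have hR : Tendsto (fun n : ℕ => (n : ℝ)⁻¹ * ∑ i ∈ Finset.range n,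
      (‖X i ω - Xbar i ω‖ ^ 2 - ‖X i ω - μ‖ ^ 2)) atTop (nhds 0) := by
    apply squeeze_zero_norm _ hcross
    intro n
    have step : ∀ i, |‖X i ω - Xbar i ω‖ ^ 2 - ‖X i ω - μ‖ ^ 2| ≤ c i * (2 * a i + c i) := by
      intro i
      have h := norm_sq_diff_bound (X i ω - Xbar i ω) (X i ω - μ)
      have heq : (X i ω - Xbar i ω) - (X i ω - μ) = μ - Xbar i ω := by abel
      rw [heq] at h
      simpa [ha', hc', mul_comm, mul_add] using h
    calc ‖(n : ℝ)⁻¹ * ∑ i ∈ Finset.range n,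
          (‖X i ω - Xbar i ω‖ ^ 2 - ‖X i ω - μ‖ ^ 2)‖
        = (n : ℝ)⁻¹ * |∑ i ∈ Finset.range n,
          (‖X i ω - Xbar i ω‖ ^ 2 - ‖X i ω - μ‖ ^ 2)| := by
          rw [Real.norm_eq_abs, abs_mul, abs_of_nonneg (by positivity : (0:ℝ) ≤ (n : ℝ)⁻¹)]
      _ ≤ (n : ℝ)⁻¹ * ∑ i ∈ Finset.range n,
          |‖X i ω - Xbar i ω‖ ^ 2 - ‖X i ω - μ‖ ^ 2| := by
          apply mul_le_mul_of_nonneg_left (Finset.abs_sum_le_sum_abs _ _) (by positivity)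
      _ ≤ (n : ℝ)⁻¹ * ∑ i ∈ Finset.range n, c i * (2 * a i + c i) := by
          apply mul_le_mul_of_nonneg_left
            (Finset.sum_le_sum fun i _ => step i) (by positivity)
  -- combine
  have hsum : Tendsto (fun n : ℕ =>
      ((n : ℝ)⁻¹ * ∑ i ∈ Finset.range n, ‖X i ω - μ‖ ^ 2) +
      ((n : ℝ)⁻¹ * ∑ i ∈ Finset.range n,
        (‖X i ω - Xbar i ω‖ ^ 2 - ‖X i ω - μ‖ ^ 2))) atTop (nhds (σ2 + 0)) :=
    hAω'.add hR
  have hfun : (fun n : ℕ => (n : ℝ)⁻¹ * ∑ i ∈ Finset.range n, ‖X i ω - Xbar i ω‖ ^ 2)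
      = fun n : ℕ =>
      ((n : ℝ)⁻¹ * ∑ i ∈ Finset.range n, ‖X i ω - μ‖ ^ 2) +
      ((n : ℝ)⁻¹ * ∑ i ∈ Finset.range n,
        (‖X i ω - Xbar i ω‖ ^ 2 - ‖X i ω - μ‖ ^ 2)) := by
    ext n
    rw [← mul_add, ← Finset.sum_add_distrib]
    congr 1
    apply Finset.sum_congr rfl
    intro i _
    ring
  rw [hfun]
  simpa using hsum
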